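/- arXiv:2412.07138 — 3 statements merged into one kernel-verified Lean document; each statement's English description precedes it below -/
import Mathlib

section
/- (Proposition 1: validity of inner-layer zeroth-order cuts.) Let d : ℕ, L ≥ 0, μ > 0 and ε ≥ 0, and let φ : EuclideanSpace ℝ (Fin d) → ℝ have L-Lipschitz gradient. Fix a cut-generation point w₀ and let g := ∫ ∇φ(w₀ + μ • u) ∂γ_d(u) (the expectation of the zeroth-order gradient estimator, i.e. the gradient of the Gaussian smoothing of φ at w₀). Then every w with φ(w) = 0 satisfies the zeroth-order cut inequality φ(w₀) + ⟪g, w − w₀⟫ ≤ ((L+1)/2)·‖w − w₀‖² + (μ²/8)·L²·(d+3)³ + ε. Consequently, the original feasible region {w | φ(w) = 0} is a subset of the feasible region determined by the zeroth-order cut generated at w₀. -/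
open MeasureTheory RealInnerProductSpace

/-- The standard Gaussian measure on `EuclideanSpace ℝ (Fin d)`, i.e. the product of `d`
copies of the real standard Gaussian measure. -/
noncomputable def stdGaussian (d : ℕ) : Measure (EuclideanSpace ℝ (Fin d)) :=
  Measure.map (MeasurableEquiv.toLp 2 (Fin d → ℝ))
    (Measure.pi (fun _ : Fin d => ProbabilityTheory.gaussianReal 0 1))


section AuxiliaryLemmas
open ProbabilityTheory Real
open scoped ENNReal NNReal

lemma int_abs_exp : ∫ x : ℝ in Set.Ioi 0, x * rexp (-x^2/2) = 1 := by
  have hderiv : ∀ x ∈ Set.Ioi (0:ℝ), HasDerivAt (fun x : ℝ => -rexp (-x^2/2)) (x * rexp (-x^2/2)) x := by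
    intro x _
    have h1 : HasDerivAt (fun x : ℝ => -x^2/2) (-x) x := by
      have := ((hasDerivAt_pow 2 x).neg).div_const 2
      simpa using this.congr_deriv (by push_cast; ring)
    have := (h1.exp).neg
    exact this.congr_deriv (by ring)
  have hint : IntegrableOn (fun x : ℝ => x * rexp (-x^2/2)) (Set.Ioi 0) := by
    have := integrableOn_rpow_mul_exp_neg_mul_sq (b := 1/2) (by norm_num) (s := 1) (by norm_num)
    refine this.congr_fun (fun x hx => ?_) measurableSet_Ioi
    dsimp only
    rw [Real.rpow_one]
    ring_nf
  have htend : Filter.Tendsto (fun x : ℝ => -rexp (-x^2/2)) Filter.atTop (nhds 0) := by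
    rw [← neg_zero]
    refine Filter.Tendsto.neg ?_
    refine Real.tendsto_exp_atBot.comp ?_
    apply Filter.Tendsto.atBot_div_const (by norm_num)
    exact Filter.tendsto_neg_atTop_atBot.comp (Filter.tendsto_pow_atTop (two_ne_zero))
  have := integral_Ioi_of_hasDerivAt_of_tendsto ?_ hderiv hint htend
  · simpa using this
  · exact Continuous.continuousWithinAt (by fun_prop)

lemma integrable_abs_mul_exp : Integrable (fun x : ℝ => |x| * rexp (-x^2/2)) := by
  have := integrable_rpow_mul_exp_neg_mul_sq (b := 1/2) (by norm_num) (s := 1) (by norm_num)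
  refine this.abs.congr (ae_of_all _ fun x => ?_)
  simp [Real.rpow_one, abs_mul, Real.abs_exp]
  ring_nf
  try exact Or.inl trivial

lemma gaussianPDF_eq_coe : gaussianPDF 0 1 = fun x => ((gaussianPDFReal 0 1 x).toNNReal : ℝ≥0∞) := by
  funext x; rw [gaussianPDF, ENNReal.ofReal]

lemma pdf_smul_abs (x : ℝ) : ((gaussianPDFReal 0 1 x).toNNReal : ℝ) * |x|
    = (√(2 * π))⁻¹ * (|x| * rexp (-x^2/2)) := by
  rw [Real.coe_toNNReal _ (gaussianPDFReal_nonneg 0 1 x), gaussianPDFReal]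
  push_cast
  ring_nf

lemma gaussianReal_abs_integrable : Integrable (fun x : ℝ => |x|) (gaussianReal 0 1) := by
  rw [gaussianReal_of_var_ne_zero 0 one_ne_zero, gaussianPDF_eq_coe,
    integrable_withDensity_iff_integrable_smul ((measurable_gaussianPDFReal 0 1).real_toNNReal)]
  refine (integrable_abs_mul_exp.const_mul ((√(2 * π))⁻¹)).congr (ae_of_all _ fun x => ?_)
  simp only [NNReal.smul_def, smul_eq_mul, pdf_smul_abs]

lemma gaussianReal_abs_integral_le : ∫ x, |x| ∂(gaussianReal 0 1) ≤ 1 := by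
  rw [gaussianReal_of_var_ne_zero 0 one_ne_zero, gaussianPDF_eq_coe,
    integral_withDensity_eq_integral_smul ((measurable_gaussianPDFReal 0 1).real_toNNReal)]
  have : ∫ x : ℝ, ((gaussianPDFReal 0 1 x).toNNReal : ℝ≥0) • |x|
      = (√(2 * π))⁻¹ * ∫ x : ℝ, |x| * rexp (-x^2/2) := by
    rw [← integral_const_mul]
    congr 1
    funext x
    rw [NNReal.smul_def, smul_eq_mul, pdf_smul_abs]
  rw [this]
  have habs : ∫ x : ℝ, |x| * rexp (-x^2/2) = 2 := by
    have : ∫ x : ℝ, |x| * rexp (-x^2/2) = 2 * ∫ x : ℝ in Set.Ioi 0, x * rexp (-x^2/2) := by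
      rw [← integral_comp_abs (f := fun x => x * rexp (-x^2/2))]
      congr 1
      funext x
      rw [sq_abs]
    rw [this, int_abs_exp]; norm_num
  rw [habs]
  rw [inv_mul_le_iff₀ (by positivity)]
  nlinarith [mul_one (√(2*π)), Real.sq_sqrt (by positivity : (0:ℝ) ≤ 2 * π), Real.sqrt_nonneg (2 * π), Real.pi_gt_three]

instance (d : ℕ) : IsProbabilityMeasure (stdGaussian d) := by
  unfold _root_.stdGaussian
  exact Measure.isProbabilityMeasure_map (MeasurableEquiv.toLp 2 (Fin d → ℝ)).measurable.aemeasurable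

lemma stdGaussian_map_eval (d : ℕ) (i : Fin d) :
    (stdGaussian d).map (fun u : EuclideanSpace ℝ (Fin d) => u i) = gaussianReal 0 1 := by
  unfold _root_.stdGaussian
  rw [Measure.map_map (by fun_prop) (MeasurableEquiv.toLp 2 (Fin d → ℝ)).measurable]
  exact (measurePreserving_eval _ i).map_eq


lemma integrable_abs_eval (d : ℕ) (i : Fin d) :
    Integrable (fun u : EuclideanSpace ℝ (Fin d) => |u i|) (stdGaussian d) := by
  have hmeas : AEMeasurable (fun u : EuclideanSpace ℝ (Fin d) => u i) (stdGaussian d) :=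
    (by fun_prop : Measurable (fun u : EuclideanSpace ℝ (Fin d) => u i)).aemeasurable
  have := (integrable_map_measure (f := fun u : EuclideanSpace ℝ (Fin d) => u i)
    (g := fun x : ℝ => |x|) ?_ hmeas).mp ?_
  · exact this
  · rw [stdGaussian_map_eval]; exact gaussianReal_abs_integrable.aestronglyMeasurable
  · rw [stdGaussian_map_eval]; exact gaussianReal_abs_integrable

lemma integral_abs_eval_le (d : ℕ) (i : Fin d) :
    ∫ u, |u i| ∂(stdGaussian d) ≤ 1 := by
  have hmeas : AEMeasurable (fun u : EuclideanSpace ℝ (Fin d) => u i) (stdGaussian d) :=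
    (by fun_prop : Measurable (fun u : EuclideanSpace ℝ (Fin d) => u i)).aemeasurable
  have : ∫ u, |u i| ∂(stdGaussian d) = ∫ x, |x| ∂(gaussianReal 0 1) := by
    rw [← stdGaussian_map_eval d i, integral_map hmeas]
    rw [stdGaussian_map_eval]
    exact gaussianReal_abs_integrable.aestronglyMeasurable
  rw [this]
  exact gaussianReal_abs_integral_le

lemma norm_le_sum_abs (d : ℕ) (u : EuclideanSpace ℝ (Fin d)) :
    ‖u‖ ≤ ∑ i, |u i| := by
  rw [EuclideanSpace.norm_eq]
  simp only [Real.norm_eq_abs]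
  have h1 : ∑ i, |u i| ^ 2 ≤ (∑ i, |u i|) ^ 2 :=
    Finset.sum_sq_le_sq_sum_of_nonneg (fun i _ => abs_nonneg _)
  calc √(∑ i, |u i| ^ 2) ≤ √((∑ i, |u i|) ^ 2) := Real.sqrt_le_sqrt h1
  _ = ∑ i, |u i| := Real.sqrt_sq (Finset.sum_nonneg fun i _ => abs_nonneg _)

lemma integrable_norm_stdGaussian (d : ℕ) :
    Integrable (fun u : EuclideanSpace ℝ (Fin d) => ‖u‖) (stdGaussian d) := by
  refine Integrable.mono' (integrable_finset_sum Finset.univ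
    (fun i _ => integrable_abs_eval d i)) ?_ (ae_of_all _ fun u => ?_)
  · exact (continuous_norm).aestronglyMeasurable
  · rw [Real.norm_eq_abs, abs_of_nonneg (norm_nonneg u)]
    exact norm_le_sum_abs d u

lemma integral_norm_stdGaussian_le (d : ℕ) :
    ∫ u, ‖u‖ ∂(stdGaussian d) ≤ d := by
  calc ∫ u, ‖u‖ ∂(stdGaussian d) ≤ ∫ u, ∑ i, |u i| ∂(stdGaussian d) :=
    (integral_mono (integrable_norm_stdGaussian d)
      (integrable_finset_sum Finset.univ (fun i _ => integrable_abs_eval d i))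
      (norm_le_sum_abs d))
  _ = ∑ i, ∫ u, |u i| ∂(stdGaussian d) :=
    (integral_finset_sum Finset.univ (fun i _ => integrable_abs_eval d i))
  _ ≤ (d:ℝ) := by
    have := Finset.sum_le_sum (s := Finset.univ)
      (fun i (_ : i ∈ Finset.univ) => integral_abs_eval_le d i)
    simpa using this

end AuxiliaryLemmas

lemma descent_aux {d : ℕ} {L : ℝ} (hL : 0 ≤ L) (φ : EuclideanSpace ℝ (Fin d) → ℝ)
    (hdiff : Differentiable ℝ φ)
    (hlip : ∀ x y, ‖gradient φ x - gradient φ y‖ ≤ L * ‖x - y‖)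
    (x y : EuclideanSpace ℝ (Fin d)) :
    φ x + ⟪gradient φ x, y - x⟫ - φ y ≤ L / 2 * ‖y - x‖ ^ 2 := by
  set δ := y - x with hδ
  have hgc : Continuous (gradient φ) := by
    refine (LipschitzWith.of_dist_le_mul (K := L.toNNReal) (f := gradient φ) ?_).continuous
    intro a b
    rw [dist_eq_norm, dist_eq_norm]
    exact le_trans (hlip a b) (mul_le_mul_of_nonneg_right (Real.le_coe_toNNReal L) (norm_nonneg _))
  have hline : ∀ t : ℝ, HasDerivAt (fun t : ℝ => φ (x + t • δ))
      ⟪gradient φ (x + t • δ), δ⟫ t := by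
    intro t
    have hF : HasFDerivAt φ (InnerProductSpace.toDual ℝ _ (gradient φ (x + t • δ))) (x + t • δ) :=
      (hdiff (x + t • δ)).hasGradientAt.hasFDerivAt
    have hl : HasDerivAt (fun t : ℝ => x + t • δ) δ t := by
      simpa using ((hasDerivAt_id t).smul_const δ).const_add x
    simpa [Function.comp_def] using hF.comp_hasDerivAt t hl
  have hcont : Continuous fun t : ℝ => ⟪gradient φ (x + t • δ), δ⟫ := by
    exact (hgc.comp (by continuity)).inner continuous_const
  have hFTC : φ y - φ x = ∫ t in (0:ℝ)..1, ⟪gradient φ (x + t • δ), δ⟫ := by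
    have := intervalIntegral.integral_eq_sub_of_hasDerivAt
      (f := fun t : ℝ => φ (x + t • δ))
      (f' := fun t : ℝ => ⟪gradient φ (x + t • δ), δ⟫)
      (fun t _ => hline t) (hcont.intervalIntegrable 0 1)
    rw [this]
    norm_num [hδ]
  have key : φ x + ⟪gradient φ x, δ⟫ - φ y
      = ∫ t in (0:ℝ)..1, (⟪gradient φ x, δ⟫ - ⟪gradient φ (x + t • δ), δ⟫) := by
    rw [intervalIntegral.integral_sub (intervalIntegrable_const) (hcont.intervalIntegrable 0 1),
      ← hFTC]
    simp
    ring
  rw [key]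
  have hbound : ∫ t in (0:ℝ)..1, (⟪gradient φ x, δ⟫ - ⟪gradient φ (x + t • δ), δ⟫)
      ≤ ∫ t in (0:ℝ)..1, L * t * ‖δ‖ ^ 2 := by
    refine intervalIntegral.integral_mono_on (by norm_num)
      ((intervalIntegrable_const.sub (hcont.intervalIntegrable 0 1))) ?_ ?_
    · exact (Continuous.intervalIntegrable (by continuity) 0 1)
    · intro t ht
      rw [Set.mem_Icc] at ht
      have h1 : ⟪gradient φ x, δ⟫ - ⟪gradient φ (x + t • δ), δ⟫
          = ⟪gradient φ x - gradient φ (x + t • δ), δ⟫ := by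
        rw [inner_sub_left]
      rw [h1]
      calc ⟪gradient φ x - gradient φ (x + t • δ), δ⟫
          ≤ ‖gradient φ x - gradient φ (x + t • δ)‖ * ‖δ‖ := real_inner_le_norm _ _
        _ ≤ (L * ‖x - (x + t • δ)‖) * ‖δ‖ :=
            mul_le_mul_of_nonneg_right (hlip _ _) (norm_nonneg _)
        _ = L * t * ‖δ‖ ^ 2 := by
            rw [show x - (x + t • δ) = -(t • δ) by abel, norm_neg, norm_smul,
              Real.norm_eq_abs, abs_of_nonneg ht.1]
            ring
  refine hbound.trans (le_of_eq ?_)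
  have h2 : ∫ t in (0:ℝ)..1, L * t * ‖δ‖ ^ 2 = (L * ‖δ‖ ^ 2) * ∫ t in (0:ℝ)..1, t := by
    rw [← intervalIntegral.integral_const_mul]
    congr 1; funext t; ring
  rw [h2, integral_id]
  ring


/-- **Proposition 1 (validity of inner-layer zeroth-order cuts).**
If `φ` has `L`-Lipschitz gradient, `g` is the Gaussian-smoothed gradient of `φ` at the
cut-generation point `w₀`, then every `w` with `φ w = 0` satisfies the zeroth-order cut
inequality; hence `{w | φ w = 0}` is contained in the region cut out by the cut. -/
theorem inner_zeroth_order_cut_valid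
    (d : ℕ) (L μ ε : ℝ) (hL : 0 ≤ L) (hμ : 0 < μ) (hε : 0 ≤ ε)
    (φ : EuclideanSpace ℝ (Fin d) → ℝ)
    (hdiff : Differentiable ℝ φ)
    (hlip : ∀ x y, ‖gradient φ x - gradient φ y‖ ≤ L * ‖x - y‖)
    (w₀ : EuclideanSpace ℝ (Fin d))
    (g : EuclideanSpace ℝ (Fin d))
    (hg : g = ∫ u, gradient φ (w₀ + μ • u) ∂(stdGaussian d)) :
    ∀ w : EuclideanSpace ℝ (Fin d), φ w = 0 →
      φ w₀ + ⟪g, w - w₀⟫ ≤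
        (L + 1) / 2 * ‖w - w₀‖ ^ 2 + μ ^ 2 / 8 * L ^ 2 * ((d : ℝ) + 3) ^ 3 + ε := by
  intro w hw
  set δ := w - w₀ with hδ
  set g₀ := gradient φ w₀ with hg₀
  have hgc : Continuous (gradient φ) := by
    refine (LipschitzWith.of_dist_le_mul (K := L.toNNReal) (f := gradient φ) ?_).continuous
    intro a b
    rw [dist_eq_norm, dist_eq_norm]
    exact le_trans (hlip a b) (mul_le_mul_of_nonneg_right (Real.le_coe_toNNReal L) (norm_nonneg _))
  -- pointwise bound on the shifted gradient
  have hptw : ∀ u : EuclideanSpace ℝ (Fin d),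
      ‖gradient φ (w₀ + μ • u) - g₀‖ ≤ L * μ * ‖u‖ := by
    intro u
    have := hlip (w₀ + μ • u) w₀
    rw [show w₀ + μ • u - w₀ = μ • u by abel, norm_smul, Real.norm_eq_abs,
      abs_of_pos hμ] at this
    linarith [this]
  have hI : Integrable (fun u : EuclideanSpace ℝ (Fin d) => gradient φ (w₀ + μ • u))
      (stdGaussian d) := by
    refine Integrable.mono' ((integrable_const (‖g₀‖)).add
      ((integrable_norm_stdGaussian d).const_mul (L * μ))) ?_ (ae_of_all _ fun u => ?_)
    · exact (hgc.comp (continuous_const.add (continuous_id.const_smul μ))).aestronglyMeasurable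
    · calc ‖gradient φ (w₀ + μ • u)‖
          ≤ ‖g₀‖ + ‖gradient φ (w₀ + μ • u) - g₀‖ := by
            have := norm_sub_norm_le (gradient φ (w₀ + μ • u)) g₀
            linarith [this]
        _ ≤ ‖g₀‖ + L * μ * ‖u‖ := by linarith [hptw u]
  have hgsub : ‖g - g₀‖ ≤ L * μ * d := by
    have heq : g - g₀ = ∫ u, (gradient φ (w₀ + μ • u) - g₀) ∂(stdGaussian d) := by
      rw [integral_sub hI (integrable_const _), integral_const]
      simp [hg]
    rw [heq]
    calc ‖∫ u, (gradient φ (w₀ + μ • u) - g₀) ∂(stdGaussian d)‖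
        ≤ ∫ u, ‖gradient φ (w₀ + μ • u) - g₀‖ ∂(stdGaussian d) :=
          norm_integral_le_integral_norm _
      _ ≤ ∫ u, L * μ * ‖u‖ ∂(stdGaussian d) :=
          (integral_mono ((hI.sub (integrable_const _)).norm)
            ((integrable_norm_stdGaussian d).const_mul _) hptw)
      _ = L * μ * ∫ u, ‖u‖ ∂(stdGaussian d) := integral_const_mul _ _
      _ ≤ L * μ * d := by
          exact mul_le_mul_of_nonneg_left (integral_norm_stdGaussian_le d)
            (by positivity)
  have hdes : φ w₀ + ⟪g₀, δ⟫ ≤ L / 2 * ‖δ‖ ^ 2 := by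
    have := descent_aux hL φ hdiff hlip w₀ w
    rw [← hδ, ← hg₀, hw] at this
    linarith
  have hsplit : ⟪g, δ⟫ = ⟪g₀, δ⟫ + ⟪g - g₀, δ⟫ := by
    rw [inner_sub_left]; ring
  have hcs : ⟪g - g₀, δ⟫ ≤ 1 / 2 * ‖δ‖ ^ 2 + 1 / 2 * (L * μ * d) ^ 2 := by
    calc ⟪g - g₀, δ⟫ ≤ ‖g - g₀‖ * ‖δ‖ := real_inner_le_norm _ _
      _ ≤ 1 / 2 * ‖δ‖ ^ 2 + 1 / 2 * ‖g - g₀‖ ^ 2 := by nlinarith [sq_nonneg (‖g - g₀‖ - ‖δ‖)]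
      _ ≤ 1 / 2 * ‖δ‖ ^ 2 + 1 / 2 * (L * μ * d) ^ 2 := by
          have h0 : (0:ℝ) ≤ ‖g - g₀‖ := norm_nonneg _
          nlinarith [hgsub]
  have hfinal : 1 / 2 * (L * μ * d) ^ 2 ≤ μ ^ 2 / 8 * L ^ 2 * ((d : ℝ) + 3) ^ 3 := by
    have hd : (0:ℝ) ≤ d := Nat.cast_nonneg d
    have h4 : 4 * (d:ℝ) ^ 2 ≤ ((d:ℝ) + 3) ^ 3 := by nlinarith
    nlinarith [mul_le_mul_of_nonneg_left h4 (by positivity : (0:ℝ) ≤ μ ^ 2 * L ^ 2 / 8)]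
  rw [hsplit]
  nlinarith [hdes, hcs, hfinal, hε]
end

section
/- (Lower bound of the true gradient norm by the smoothed gradient norm.) Let d : ℕ, L ≥ 0 and μ ≥ 0, and let f : EuclideanSpace ℝ (Fin d) → ℝ have L-Lipschitz gradient. Then for every x, (1/2)·‖∇f(x)‖² − (μ²·L²/4)·(d+3)³ ≤ ‖∫ ∇f(x + μ • u) ∂γ_d(u)‖². -/
open MeasureTheory RealInnerProductSpace

open Real
open scoped NNReal ENNReal

lemma map_eval_pi' {ι : Type*} [Fintype ι] [DecidableEq ι] {α : ι → Type*}
    [∀ i, MeasurableSpace (α i)] (μ : ∀ i, Measure (α i)) [∀ i, IsProbabilityMeasure (μ i)]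
    [∀ i, SigmaFinite (μ i)] (i : ι) :
    (Measure.pi μ).map (Function.eval i) = μ i := by
  ext s hs
  rw [Measure.map_apply (measurable_pi_apply i) hs, Set.eval_preimage, Measure.pi_pi]
  rw [Finset.prod_eq_single i (fun j _ hj => by simp [Function.update_of_ne hj])
    (by simp)]
  simp

lemma gaussian_sq_le (x : ℝ) :
    ProbabilityTheory.gaussianPDFReal 0 1 x * x ^ 2 ≤
      (Real.sqrt (2 * π))⁻¹ * (4 * (Real.exp 1)⁻¹) * Real.exp (-(1/4) * x ^ 2) := by
  have h1 : ProbabilityTheory.gaussianPDFReal 0 1 x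
      = (Real.sqrt (2 * π))⁻¹ * Real.exp (-(x ^ 2) / 2) := by
    simp [ProbabilityTheory.gaussianPDFReal]
  rw [h1]
  have he : 0 < Real.exp 1 := Real.exp_pos 1
  have key : x ^ 2 * Real.exp (-(x ^ 2) / 2) ≤ 4 * (Real.exp 1)⁻¹ * Real.exp (-(1/4) * x ^ 2) := by
    have h2 : x ^ 2 / 4 ≤ Real.exp (x ^ 2 / 4 - 1) * 1 := by
      have := Real.add_one_le_exp (x ^ 2 / 4 - 1); linarith
    have h3 : Real.exp (x ^ 2 / 4 - 1) = Real.exp (x^2/4) * (Real.exp 1)⁻¹ := by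
      rw [← Real.exp_neg, ← Real.exp_add]; ring_nf
    have h4 : Real.exp (-(x ^ 2) / 2) * Real.exp (x^2/4) = Real.exp (-(1/4) * x^2) := by
      rw [← Real.exp_add]; ring_nf
    calc x ^ 2 * Real.exp (-(x ^ 2) / 2)
        ≤ (4 * (Real.exp (x^2/4) * (Real.exp 1)⁻¹)) * Real.exp (-(x ^ 2) / 2) := by
          have := h2; rw [h3] at this
          nlinarith [Real.exp_pos (-(x^2)/2)]
      _ = 4 * (Real.exp 1)⁻¹ * (Real.exp (-(x ^ 2) / 2) * Real.exp (x^2/4)) := by ring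
      _ = 4 * (Real.exp 1)⁻¹ * Real.exp (-(1/4) * x ^ 2) := by rw [h4]
  have hs : (0:ℝ) ≤ (Real.sqrt (2 * π))⁻¹ := by positivity
  calc (Real.sqrt (2 * π))⁻¹ * Real.exp (-(x ^ 2) / 2) * x ^ 2
      = (Real.sqrt (2 * π))⁻¹ * (x ^ 2 * Real.exp (-(x ^ 2) / 2)) := by ring
    _ ≤ (Real.sqrt (2 * π))⁻¹ * (4 * (Real.exp 1)⁻¹ * Real.exp (-(1/4) * x ^ 2)) :=
        mul_le_mul_of_nonneg_left key hs
    _ = (Real.sqrt (2 * π))⁻¹ * (4 * (Real.exp 1)⁻¹) * Real.exp (-(1/4) * x ^ 2) := by ring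

lemma gaussianReal_eq_withDensity :
    ProbabilityTheory.gaussianReal 0 1 =
      volume.withDensity
        (fun x => ((Real.toNNReal (ProbabilityTheory.gaussianPDFReal 0 1 x) : ℝ≥0) : ENNReal)) := by
  rw [ProbabilityTheory.gaussianReal_of_var_ne_zero 0 one_ne_zero]
  rfl

lemma pdf_measurable : Measurable (fun x => Real.toNNReal (ProbabilityTheory.gaussianPDFReal 0 1 x)) :=
  (ProbabilityTheory.measurable_gaussianPDFReal 0 1).real_toNNReal

lemma smul_pdf_eq (x r : ℝ) :
    Real.toNNReal (ProbabilityTheory.gaussianPDFReal 0 1 x) • r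
      = ProbabilityTheory.gaussianPDFReal 0 1 x * r := by
  rw [NNReal.smul_def, smul_eq_mul, Real.coe_toNNReal _ (ProbabilityTheory.gaussianPDFReal_nonneg 0 1 x)]

lemma integrable_pdf_sq : Integrable (fun x : ℝ => ProbabilityTheory.gaussianPDFReal 0 1 x * x ^ 2) := by
  apply Integrable.mono'
    (((integrable_exp_neg_mul_sq (by norm_num : (0:ℝ) < 1/4)).const_mul
      ((Real.sqrt (2 * π))⁻¹ * (4 * (Real.exp 1)⁻¹))))
  · exact (((ProbabilityTheory.measurable_gaussianPDFReal 0 1).mul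
      (measurable_id.pow_const 2)).aestronglyMeasurable)
  · refine Filter.Eventually.of_forall fun x => ?_
    rw [Real.norm_eq_abs, abs_of_nonneg (mul_nonneg (ProbabilityTheory.gaussianPDFReal_nonneg 0 1 x) (sq_nonneg x))]
    exact gaussian_sq_le x

lemma integrable_sq_gaussian : Integrable (fun y : ℝ => y ^ 2) (ProbabilityTheory.gaussianReal 0 1) := by
  rw [gaussianReal_eq_withDensity, integrable_withDensity_iff_integrable_smul pdf_measurable]
  simp only [smul_pdf_eq]
  exact integrable_pdf_sq

lemma integral_sq_gaussian_le : ∫ y, y ^ 2 ∂(ProbabilityTheory.gaussianReal 0 1) ≤ 3 := by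
  rw [gaussianReal_eq_withDensity, integral_withDensity_eq_integral_smul pdf_measurable]
  simp_rw [smul_pdf_eq]
  have hmaj : ∫ x : ℝ, ProbabilityTheory.gaussianPDFReal 0 1 x * x ^ 2
      ≤ ∫ x : ℝ, (Real.sqrt (2 * π))⁻¹ * (4 * (Real.exp 1)⁻¹) * Real.exp (-(1/4) * x ^ 2) := by
    apply integral_mono integrable_pdf_sq
      ((integrable_exp_neg_mul_sq (by norm_num : (0:ℝ) < 1/4)).const_mul _)
    exact gaussian_sq_le
  have hval : ∫ x : ℝ, (Real.sqrt (2 * π))⁻¹ * (4 * (Real.exp 1)⁻¹) * Real.exp (-(1/4) * x ^ 2)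
      = (Real.sqrt (2 * π))⁻¹ * (4 * (Real.exp 1)⁻¹) * Real.sqrt (π / (1/4)) := by
    rw [integral_const_mul, integral_gaussian]
  have hle : (Real.sqrt (2 * π))⁻¹ * (4 * (Real.exp 1)⁻¹) * Real.sqrt (π / (1/4)) ≤ 3 := by
    have hpi : 0 < π := Real.pi_pos
    set a := Real.sqrt (π / (1/4)) with ha
    set b := Real.sqrt (2 * π) with hb
    have ha2 : a ^ 2 = 4 * π := by
      rw [ha, Real.sq_sqrt (by positivity)]; ring
    have hb2 : b ^ 2 = 2 * π := by rw [hb, Real.sq_sqrt (by positivity)]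
    have hbpos : 0 < b := Real.sqrt_pos.mpr (by positivity)
    have hapos : 0 ≤ a := Real.sqrt_nonneg _
    have he : (2:ℝ) ≤ Real.exp 1 := by
      have := Real.exp_one_gt_d9; linarith
    have hepos : (0:ℝ) < Real.exp 1 := Real.exp_pos 1
    have he2 : (4:ℝ) ≤ (Real.exp 1) ^ 2 := by nlinarith
    have hsq : (4 * a) ^ 2 ≤ (3 * Real.exp 1 * b) ^ 2 := by
      nlinarith [mul_le_mul_of_nonneg_right he2 (sq_nonneg b)]
    have key : 4 * a ≤ 3 * Real.exp 1 * b := by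
      nlinarith [hsq, mul_pos (mul_pos (show (0:ℝ) < 3 by norm_num) hepos) hbpos, hapos]
    calc b⁻¹ * (4 * (Real.exp 1)⁻¹) * a = (4 * a) * (b⁻¹ * (Real.exp 1)⁻¹) := by ring
      _ ≤ (3 * Real.exp 1 * b) * (b⁻¹ * (Real.exp 1)⁻¹) := by
          apply mul_le_mul_of_nonneg_right key (by positivity)
      _ = 3 := by field_simp
  linarith

/-- **Lower bound of the true gradient norm by the smoothed gradient norm.**
If `f` has `L`-Lipschitz gradient, then
`(1/2)‖∇f(x)‖² − (μ²L²/4)(d+3)³ ≤ ‖∇f_μ(x)‖²`, where `∇f_μ(x)` is the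
Gaussian-averaged gradient. -/
theorem true_gradient_lower_bound
    (d : ℕ) (L μ : ℝ) (hL : 0 ≤ L) (hμ : 0 ≤ μ)
    (f : EuclideanSpace ℝ (Fin d) → ℝ)
    (hdiff : Differentiable ℝ f)
    (hlip : ∀ x y, ‖gradient f x - gradient f y‖ ≤ L * ‖x - y‖) :
    ∀ x : EuclideanSpace ℝ (Fin d),
      1 / 2 * ‖gradient f x‖ ^ 2 - μ ^ 2 * L ^ 2 / 4 * ((d : ℝ) + 3) ^ 3 ≤
        ‖∫ u, gradient f (x + μ • u) ∂(stdGaussian d)‖ ^ 2 := by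
  intro x
  haveI : IsProbabilityMeasure (stdGaussian d) := by
    unfold stdGaussian; exact Measure.isProbabilityMeasure_map (MeasurableEquiv.toLp 2 (Fin d → ℝ)).measurable.aemeasurable
  have hmeas : ∀ i : Fin d, Measurable (fun u : EuclideanSpace ℝ (Fin d) => u i) :=
    fun i => (measurable_pi_apply i).comp (MeasurableEquiv.toLp 2 (Fin d → ℝ)).symm.measurable
  -- coordinate maps
  have hmap : ∀ i : Fin d, (stdGaussian d).map (fun u : EuclideanSpace ℝ (Fin d) => u i)
      = ProbabilityTheory.gaussianReal 0 1 := by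
    intro i
    unfold stdGaussian
    rw [Measure.map_map (hmeas i) (MeasurableEquiv.toLp 2 (Fin d → ℝ)).measurable]
    exact map_eval_pi' _ i
  have hco : ∀ i : Fin d,
      Integrable (fun u : EuclideanSpace ℝ (Fin d) => (u i) ^ 2) (stdGaussian d) := by
    intro i
    have h := integrable_sq_gaussian
    rw [← hmap i] at h
    exact (integrable_map_measure h.aestronglyMeasurable
      (hmeas i).aemeasurable).mp h
  have hcoval : ∀ i : Fin d,
      ∫ u : EuclideanSpace ℝ (Fin d), (u i) ^ 2 ∂(stdGaussian d) ≤ 3 := by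
    intro i
    have h := integrable_sq_gaussian
    rw [← hmap i] at h
    have := integral_map (μ := stdGaussian d) (φ := fun u : EuclideanSpace ℝ (Fin d) => u i)
      (hmeas i).aemeasurable h.aestronglyMeasurable (f := fun y : ℝ => y ^ 2)
    rw [hmap i] at this
    rw [← this]
    exact integral_sq_gaussian_le
  have hnormsq : (fun u : EuclideanSpace ℝ (Fin d) => ‖u‖ ^ 2)
      = fun u => ∑ i, (u i) ^ 2 := by
    funext u
    rw [EuclideanSpace.norm_eq, Real.sq_sqrt (by positivity)]
    simp [Real.norm_eq_abs, sq_abs]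
  have h2 : Integrable (fun u : EuclideanSpace ℝ (Fin d) => ‖u‖ ^ 2) (stdGaussian d) := by
    rw [hnormsq]; exact integrable_finset_sum _ (fun i _ => hco i)
  have h2val : ∫ u, ‖u‖ ^ 2 ∂(stdGaussian d) ≤ 3 * d := by
    rw [hnormsq, integral_finset_sum _ (fun i _ => hco i)]
    calc (∑ i : Fin d, ∫ u : EuclideanSpace ℝ (Fin d), (u i) ^ 2 ∂(stdGaussian d))
        ≤ ∑ _i : Fin d, (3:ℝ) := Finset.sum_le_sum (fun i _ => hcoval i)
      _ = 3 * d := by simp [mul_comm]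
  have h1 : Integrable (fun u : EuclideanSpace ℝ (Fin d) => ‖u‖) (stdGaussian d) := by
    apply Integrable.mono' ((integrable_const (1:ℝ)).add h2)
    · exact continuous_norm.aestronglyMeasurable
    · refine Filter.Eventually.of_forall fun u => ?_
      simp only [Pi.add_apply]
      rw [Real.norm_eq_abs, abs_of_nonneg (norm_nonneg u)]
      nlinarith [norm_nonneg u, sq_nonneg (‖u‖ - 1)]
  have h1val : ∫ u, ‖u‖ ∂(stdGaussian d) ≤ ((d:ℝ) + 3) / 2 := by
    have hmono : ∫ u, ‖u‖ ∂(stdGaussian d)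
        ≤ ∫ u, (3 + ‖u‖ ^ 2 / 3) / 2 ∂(stdGaussian d) := by
      apply integral_mono h1 (((integrable_const (3:ℝ)).add (h2.div_const 3)).div_const 2)
      intro u
      have := sq_nonneg (‖u‖ - 3)
      dsimp
      nlinarith
    have hval : ∫ u, (3 + ‖u‖ ^ 2 / 3) / 2 ∂(stdGaussian d)
        = (3 + (∫ u, ‖u‖ ^ 2 ∂(stdGaussian d)) / 3) / 2 := by
      rw [integral_div, integral_add (integrable_const _) (h2.div_const _),
        integral_const, integral_div]
      simp
    rw [hval] at hmono
    have hd : (0:ℝ) ≤ d := Nat.cast_nonneg d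
    linarith
  -- continuity of the gradient
  have hgc : Continuous (gradient f) := by
    have : LipschitzWith (Real.toNNReal L) (gradient f) := by
      apply LipschitzWith.of_dist_le_mul
      intro a b
      rw [dist_eq_norm, dist_eq_norm, Real.coe_toNNReal L hL]
      exact hlip a b
    exact this.continuous
  -- integrability of the shifted gradient
  have hInt : Integrable (fun u : EuclideanSpace ℝ (Fin d) =>
      gradient f (x + μ • u)) (stdGaussian d) := by
    apply Integrable.mono' ((integrable_const ‖gradient f x‖).add (h1.const_mul (L * μ)))
    · exact (hgc.comp (continuous_const.add (continuous_id.const_smul μ))).aestronglyMeasurable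
    · refine Filter.Eventually.of_forall fun u => ?_
      have h3 := hlip (x + μ • u) x
      have h4 : ‖x + μ • u - x‖ = μ * ‖u‖ := by
        rw [add_sub_cancel_left, norm_smul, Real.norm_eq_abs, abs_of_nonneg hμ]
      have h5 : ‖gradient f (x + μ • u)‖ - ‖gradient f x‖
          ≤ ‖gradient f (x + μ • u) - gradient f x‖ := norm_sub_norm_le _ _
      rw [h4] at h3
      have := mul_nonneg hL hμ
      simp only [Pi.add_apply]
      nlinarith [norm_nonneg u]
  set b := ∫ u, gradient f (x + μ • u) ∂(stdGaussian d) with hb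
  set a := gradient f x with ha
  have hdiffnorm : ‖a - b‖ ≤ μ * L * (((d:ℝ) + 3) / 2) := by
    have heq : a - b = ∫ u, (a - gradient f (x + μ • u)) ∂(stdGaussian d) := by
      rw [integral_sub (integrable_const a) hInt, integral_const]
      simp
      exact hb
    rw [heq]
    calc ‖∫ u, (a - gradient f (x + μ • u)) ∂(stdGaussian d)‖
        ≤ ∫ u, ‖a - gradient f (x + μ • u)‖ ∂(stdGaussian d) := norm_integral_le_integral_norm _
      _ ≤ ∫ u, (μ * L) * ‖u‖ ∂(stdGaussian d) := by
          apply integral_mono ((integrable_const a).sub hInt).norm (h1.const_mul _)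
          intro u
          have h3 := hlip x (x + μ • u)
          have h4 : ‖x - (x + μ • u)‖ = μ * ‖u‖ := by
            rw [sub_add_eq_sub_sub, sub_self, zero_sub, norm_neg, norm_smul,
              Real.norm_eq_abs, abs_of_nonneg hμ]
          rw [h4] at h3
          calc ‖a - gradient f (x + μ • u)‖ ≤ L * (μ * ‖u‖) := h3
            _ = (μ * L) * ‖u‖ := by ring
      _ = (μ * L) * ∫ u, ‖u‖ ∂(stdGaussian d) := integral_const_mul _ _
      _ ≤ μ * L * (((d:ℝ) + 3) / 2) := by
          apply mul_le_mul_of_nonneg_left h1val (mul_nonneg hμ hL)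
  have htri : ‖a‖ ≤ ‖b‖ + ‖a - b‖ := by
    calc ‖a‖ = ‖b + (a - b)‖ := by rw [add_sub_cancel]
      _ ≤ ‖b‖ + ‖a - b‖ := norm_add_le _ _
  have hsq : ‖a - b‖ ^ 2 ≤ μ ^ 2 * L ^ 2 / 4 * ((d:ℝ) + 3) ^ 2 := by
    have := pow_le_pow_left₀ (norm_nonneg (a - b)) hdiffnorm 2
    calc ‖a - b‖ ^ 2 ≤ (μ * L * (((d:ℝ) + 3) / 2)) ^ 2 := this
      _ = μ ^ 2 * L ^ 2 / 4 * ((d:ℝ) + 3) ^ 2 := by ring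
  have h33 : μ ^ 2 * L ^ 2 / 4 * ((d:ℝ) + 3) ^ 2 ≤ μ ^ 2 * L ^ 2 / 4 * ((d:ℝ) + 3) ^ 3 := by
    apply mul_le_mul_of_nonneg_left _ (by positivity)
    have hd : (1:ℝ) ≤ (d:ℝ) + 3 := by
      have : (0:ℝ) ≤ d := Nat.cast_nonneg d
      linarith
    exact pow_le_pow_right₀ hd (by norm_num)
  nlinarith [htri, hsq, h33, sq_nonneg (‖b‖ - ‖a - b‖), norm_nonneg a, norm_nonneg b,
    norm_nonneg (a - b)]
end

section
/- (Descent inequality for the consensus-variable update.) Let E and Z be real inner product spaces and let H : WithLp 2 (E × Z) → ℝ be differentiable with L-Lipschitz gradient with respect to the ℓ²-product norm ‖(e, z)‖² = ‖e‖² + ‖z‖² (L ≥ 0). Fix x, x⁺ ∈ E, z ∈ Z and η > 0. Let G_z denote the gradient at z of the function z' ↦ H(x, z'), and set z⁺ := z − η • G_z. Then H(x⁺, z⁺) ≤ H(x⁺, z) − (η − (L+1)·η²/2)·‖G_z‖² + (L²/2)·‖x⁺ − x‖². -/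
open RealInnerProductSpace InnerProductSpace

/-- Descent lemma for a function with Lipschitz gradient. -/
theorem descent_lemma_aux {F : Type*} [NormedAddCommGroup F] [InnerProductSpace ℝ F]
    [CompleteSpace F] (f : F → ℝ) (g : F → F)
    (hg : ∀ w : F, HasGradientAt f (g w) w)
    (L : ℝ) (hL : 0 ≤ L)
    (hlip : ∀ w w' : F, ‖g w - g w'‖ ≤ L * ‖w - w'‖)
    (x y : F) :
    f y ≤ f x + ⟪g x, y - x⟫_ℝ + L / 2 * ‖y - x‖ ^ 2 := by
  set v := y - x with hv
  set ψ : ℝ → ℝ := fun t =>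
    f (x + t • v) - t * ⟪g x, v⟫_ℝ - L / 2 * t ^ 2 * ‖v‖ ^ 2 with hψ
  have hψd : ∀ t : ℝ, HasDerivAt ψ
      (⟪g (x + t • v), v⟫_ℝ - ⟪g x, v⟫_ℝ - L * t * ‖v‖ ^ 2) t := by
    intro t
    have hl : HasDerivAt (fun t : ℝ => x + t • v) v t := by
      simpa using ((hasDerivAt_id t).smul_const v).const_add x
    have h1 : HasDerivAt (fun t : ℝ => f (x + t • v)) ⟪g (x + t • v), v⟫_ℝ t := by
      have := ((hg (x + t • v)).hasFDerivAt).comp_hasDerivAt t hl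
      simpa [InnerProductSpace.toDual_apply_apply, Function.comp_def] using this
    have h2 : HasDerivAt (fun t : ℝ => t * ⟪g x, v⟫_ℝ) ⟪g x, v⟫_ℝ t := by
      simpa using (hasDerivAt_id t).mul_const ⟪g x, v⟫_ℝ
    have h3 : HasDerivAt (fun t : ℝ => L / 2 * t ^ 2 * ‖v‖ ^ 2)
        (L * t * ‖v‖ ^ 2) t := by
      have := ((hasDerivAt_pow 2 t).const_mul (L / 2)).mul_const (‖v‖ ^ 2)
      refine this.congr_deriv ?_
      ring
    exact (h1.sub h2).sub h3
  have hanti : AntitoneOn ψ (Set.Icc (0:ℝ) 1) := by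
    apply antitoneOn_of_deriv_nonpos (convex_Icc 0 1)
    · exact fun t _ => ((hψd t).continuousAt).continuousWithinAt
    · exact fun t _ => ((hψd t).differentiableAt).differentiableWithinAt
    · intro t ht
      rw [interior_Icc] at ht
      rw [(hψd t).deriv]
      have h1 : ⟪g (x + t • v) - g x, v⟫_ℝ ≤ ‖g (x + t • v) - g x‖ * ‖v‖ :=
        real_inner_le_norm _ _
      have h2 : ‖g (x + t • v) - g x‖ ≤ L * (t * ‖v‖) := by
        have := hlip (x + t • v) x
        simpa [norm_smul, abs_of_nonneg ht.1.le] using this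
      have h3 : ⟪g (x + t • v), v⟫_ℝ - ⟪g x, v⟫_ℝ = ⟪g (x + t • v) - g x, v⟫_ℝ := by
        rw [inner_sub_left]
      nlinarith [norm_nonneg v, norm_nonneg (g (x + t • v) - g x)]
  have h01 := hanti (Set.left_mem_Icc.2 zero_le_one) (Set.right_mem_Icc.2 zero_le_one)
    zero_le_one
  have hψ0 : ψ 0 = f x := by simp [hψ]
  have hψ1 : ψ 1 = f y - ⟪g x, v⟫_ℝ - L / 2 * ‖v‖ ^ 2 := by
    simp [hψ, hv]
  rw [hψ0, hψ1] at h01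
  linarith

theorem section_hasGradientAt {E Z : Type*}
    [NormedAddCommGroup E] [InnerProductSpace ℝ E] [CompleteSpace E]
    [NormedAddCommGroup Z] [InnerProductSpace ℝ Z] [CompleteSpace Z]
    (H : WithLp 2 (E × Z) → ℝ) (hdiff : Differentiable ℝ H) (e : E) (z : Z) :
    HasGradientAt (fun z' : Z => H ((WithLp.equiv 2 (E × Z)).symm (e, z')))
      ((gradient H ((WithLp.equiv 2 (E × Z)).symm (e, z))).snd) z := by
  set ι : Z →L[ℝ] WithLp 2 (E × Z) :=
    ((WithLp.prodContinuousLinearEquiv 2 ℝ E Z).symm : (E × Z) →L[ℝ] WithLp 2 (E × Z)).comp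
      (ContinuousLinearMap.inr ℝ E Z) with hι
  have hιapp : ∀ v : Z, ι v = (WithLp.equiv 2 (E × Z)).symm (0, v) := fun v => rfl
  set w : WithLp 2 (E × Z) := (WithLp.equiv 2 (E × Z)).symm (e, z) with hw
  have haff : ∀ z' : Z, (WithLp.equiv 2 (E × Z)).symm (e, z')
      = (WithLp.equiv 2 (E × Z)).symm (e, 0) + ι z' := by
    intro z'
    apply (WithLp.equiv 2 (E × Z)).injective
    simp [hιapp, Prod.ext_iff]
  have hline : HasFDerivAt (fun z' : Z => (WithLp.equiv 2 (E × Z)).symm (e, z')) ι z := by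
    have := (ι.hasFDerivAt (x := z)).const_add ((WithLp.equiv 2 (E × Z)).symm (e, 0))
    simpa only [← haff] using this
  have hcomp := ((hdiff w).hasGradientAt.hasFDerivAt).comp z hline
  have hkey : (toDual ℝ (WithLp 2 (E × Z)) (gradient H w)).comp ι
      = toDual ℝ Z ((gradient H w).snd) := by
    apply ContinuousLinearMap.ext
    intro v
    rw [ContinuousLinearMap.comp_apply, toDual_apply_apply, hιapp, WithLp.prod_inner_apply]
    simp
  rw [hkey] at hcomp
  simpa [Function.comp_def] using hcomp.hasGradientAt

/-- **Descent inequality for the consensus-variable update.**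
Let `H` be differentiable with `L`-Lipschitz gradient on the ℓ²-product `WithLp 2 (E × Z)`.
If `G_z` is the gradient at `z` of the section `z' ↦ H (x, z')` and
`z⁺ = z − η • G_z`, then
`H (x⁺, z⁺) ≤ H (x⁺, z) − (η − (L+1)η²/2)‖G_z‖² + (L²/2)‖x⁺ − x‖²`. -/
theorem consensus_block_descent
    {E Z : Type*} [NormedAddCommGroup E] [InnerProductSpace ℝ E] [CompleteSpace E]
    [NormedAddCommGroup Z] [InnerProductSpace ℝ Z] [CompleteSpace Z]
    (L : ℝ) (hL : 0 ≤ L)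
    (H : WithLp 2 (E × Z) → ℝ)
    (hdiff : Differentiable ℝ H)
    (hlip : ∀ w w' : WithLp 2 (E × Z), ‖gradient H w - gradient H w'‖ ≤ L * ‖w - w'‖)
    (x xp : E) (z : Z) (η : ℝ) (hη : 0 < η)
    (Gz : Z)
    (hGz : HasGradientAt (fun z' : Z => H ((WithLp.equiv 2 (E × Z)).symm (x, z'))) Gz z)
    (zp : Z) (hzp : zp = z - η • Gz) :
    H ((WithLp.equiv 2 (E × Z)).symm (xp, zp)) ≤
      H ((WithLp.equiv 2 (E × Z)).symm (xp, z))
        - (η - (L + 1) * η ^ 2 / 2) * ‖Gz‖ ^ 2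
        + L ^ 2 / 2 * ‖xp - x‖ ^ 2 := by
  classical
  set g : Z → Z := fun z' => (gradient H ((WithLp.equiv 2 (E × Z)).symm (xp, z'))).snd with hgdef
  have hg : ∀ z' : Z, HasGradientAt
      (fun z'' : Z => H ((WithLp.equiv 2 (E × Z)).symm (xp, z''))) (g z') z' :=
    fun z' => section_hasGradientAt H hdiff xp z'
  -- component norm ≤ full norm in WithLp 2
  have hsnd : ∀ p : WithLp 2 (E × Z), ‖p.snd‖ ≤ ‖p‖ := by
    intro p
    have h := WithLp.prod_norm_sq_eq_of_L2 p
    nlinarith [norm_nonneg p, norm_nonneg p.fst, norm_nonneg p.snd]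
  -- norm of a vector supported on the second coordinate
  have hnormsnd : ∀ (a : E) (b : Z), ‖(WithLp.equiv 2 (E × Z)).symm (a, b)‖
      = Real.sqrt (‖a‖ ^ 2 + ‖b‖ ^ 2) := by
    intro a b
    rw [WithLp.prod_norm_eq_of_L2]
    rfl
  have hglip : ∀ z1 z2 : Z, ‖g z1 - g z2‖ ≤ L * ‖z1 - z2‖ := by
    intro z1 z2
    have h1 : g z1 - g z2 = (gradient H ((WithLp.equiv 2 (E × Z)).symm (xp, z1))
        - gradient H ((WithLp.equiv 2 (E × Z)).symm (xp, z2))).snd := rfl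
    have h2 := hlip ((WithLp.equiv 2 (E × Z)).symm (xp, z1))
      ((WithLp.equiv 2 (E × Z)).symm (xp, z2))
    have h3 : (WithLp.equiv 2 (E × Z)).symm (xp, z1)
        - (WithLp.equiv 2 (E × Z)).symm (xp, z2)
        = (WithLp.equiv 2 (E × Z)).symm (0, z1 - z2) := by
      apply (WithLp.equiv 2 (E × Z)).injective
      simp [Prod.ext_iff]
    have h4 : ‖(WithLp.equiv 2 (E × Z)).symm ((0 : E), z1 - z2)‖ = ‖z1 - z2‖ := by
      rw [hnormsnd]
      simp [Real.sqrt_sq (norm_nonneg _)]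
    calc ‖g z1 - g z2‖ ≤ ‖gradient H ((WithLp.equiv 2 (E × Z)).symm (xp, z1))
          - gradient H ((WithLp.equiv 2 (E × Z)).symm (xp, z2))‖ := by
          rw [h1]; exact hsnd _
      _ ≤ L * ‖z1 - z2‖ := by rw [h3, h4] at h2; exact h2
  -- identify Gz with the second component of the full gradient at (x, z)
  have hGzval : Gz = (gradient H ((WithLp.equiv 2 (E × Z)).symm (x, z))).snd :=
    hGz.unique (section_hasGradientAt H hdiff x z)
  -- cross Lipschitz bound
  have hcross : ‖g z - Gz‖ ≤ L * ‖xp - x‖ := by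
    rw [hGzval]
    have h1 : g z - (gradient H ((WithLp.equiv 2 (E × Z)).symm (x, z))).snd
        = (gradient H ((WithLp.equiv 2 (E × Z)).symm (xp, z))
          - gradient H ((WithLp.equiv 2 (E × Z)).symm (x, z))).snd := rfl
    have h2 := hlip ((WithLp.equiv 2 (E × Z)).symm (xp, z))
      ((WithLp.equiv 2 (E × Z)).symm (x, z))
    have h3 : (WithLp.equiv 2 (E × Z)).symm (xp, z)
        - (WithLp.equiv 2 (E × Z)).symm (x, z)
        = (WithLp.equiv 2 (E × Z)).symm (xp - x, 0) := by
      apply (WithLp.equiv 2 (E × Z)).injective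
      simp [Prod.ext_iff]
    have h4 : ‖(WithLp.equiv 2 (E × Z)).symm (xp - x, (0 : Z))‖ = ‖xp - x‖ := by
      rw [hnormsnd]
      simp [Real.sqrt_sq (norm_nonneg _)]
    calc _ ≤ ‖gradient H ((WithLp.equiv 2 (E × Z)).symm (xp, z))
          - gradient H ((WithLp.equiv 2 (E × Z)).symm (x, z))‖ := by rw [h1]; exact hsnd _
      _ ≤ L * ‖xp - x‖ := by rw [h3, h4] at h2; exact h2
  -- descent lemma on the section at xp
  have hdesc := descent_lemma_aux (fun z' : Z => H ((WithLp.equiv 2 (E × Z)).symm (xp, z')))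
    g hg L hL hglip z zp
  have hzpz : zp - z = -(η • Gz) := by rw [hzp]; abel
  have hnormstep : ‖zp - z‖ ^ 2 = η ^ 2 * ‖Gz‖ ^ 2 := by
    rw [hzpz, norm_neg, norm_smul, Real.norm_eq_abs, abs_of_pos hη, mul_pow]
  have hinner : ⟪g z, zp - z⟫_ℝ = -(η * ⟪g z, Gz⟫_ℝ) := by
    rw [hzpz, inner_neg_right, real_inner_smul_right]
  have hinner2 : ⟪g z, Gz⟫_ℝ = ‖Gz‖ ^ 2 + ⟪g z - Gz, Gz⟫_ℝ := by
    rw [inner_sub_left, real_inner_self_eq_norm_sq]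
    ring
  have hinner3 : ⟪g z - Gz, Gz⟫_ℝ ≥ -(L * ‖xp - x‖ * ‖Gz‖) := by
    have := real_inner_le_norm (Gz - g z) Gz
    have h5 : ⟪Gz - g z, Gz⟫_ℝ = -⟪g z - Gz, Gz⟫_ℝ := by
      rw [← inner_neg_left]; congr 1; abel
    have h6 : ‖Gz - g z‖ = ‖g z - Gz‖ := norm_sub_rev _ _
    nlinarith [norm_nonneg Gz, mul_le_mul_of_nonneg_right hcross (norm_nonneg Gz)]
  rw [hinner, hinner2, hnormstep] at hdesc
  nlinarith [hdesc, sq_nonneg (L * ‖xp - x‖ - η * ‖Gz‖), norm_nonneg Gz, hη.le]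
end
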